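/- Let V be a finite vertex type and F a finite face type, with each face f assigned an edge set E_f such that every vertex incident to an edge of E_f is incident to exactly two edges of E_f, and assume the two-face condition and the single-shared-edge condition. If the union graph G on V with edge set E = ⋃_f E_f is connected and nonempty, and for every vertex v the link graph L_v is connected, then the Euler-transformed graph Ĝ admits an Eulerian circuit: a closed walk that traverses every edge of Ĝ exactly once. -/

import Mathlib

open scoped Classical

noncomputable section

namespace EulerAux

open SimpleGraph SimpleGraph.Walk

variable {V : Type*} [Fintype V] [DecidableEq V] {G : SimpleGraph V}

/-- any trail has length at most the number of edges -/
lemma trail_length_le [DecidableRel G.Adj] {u w : V} {q : G.Walk u w} (hq : q.IsTrail) :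
    q.length ≤ G.edgeFinset.card := by
  rw [← length_edges]
  rw [← List.toFinset_card_of_nodup hq.edges_nodup]
  apply Finset.card_le_card
  intro e he
  rw [List.mem_toFinset] at he
  rw [mem_edgeFinset]
  exact q.edges_subset_edgeSet he

/-- odd count of edges at the far endpoint of a non-closed trail -/
lemma odd_countP {u w : V} {q : G.Walk u w} (hq : q.IsTrail) (hne : u ≠ w) :
    ¬ Even (q.edges.countP fun e => w ∈ e) := fun hEv =>
  (((hq.even_countP_edges_iff w).mp hEv) hne).2 rfl

/-- a vertex on the circuit with an incident unused edge exists, walking from a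
support vertex to a missing edge -/
lemma exists_unused_at_support {v : V} (c : G.Walk v v)
    {x y : V} (p : G.Walk x y) (hx : x ∈ c.support)
    (hmiss : ∃ e ∈ p.edges, e ∉ c.edges) :
    ∃ u u', u ∈ c.support ∧ G.Adj u u' ∧ s(u, u') ∉ c.edges := by
  induction p with
  | nil => simp at hmiss
  | cons h p ih =>
    rename_i a b _ 
    by_cases hab : s(a, b) ∈ c.edges
    · refine ih (c.snd_mem_support_of_mem_edges hab) ?_
      obtain ⟨e, he, hec⟩ := hmiss
      rw [edges_cons, List.mem_cons] at he
      rcases he with rfl | he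
      · exact absurd hab hec
      · exact ⟨e, he, hec⟩
    · exact ⟨a, b, hx, h, hab⟩

/-- Hierholzer extension step -/
lemma exists_longer [DecidableRel G.Adj] (heven : ∀ x : V, Even (G.degree x))
    (hconn : G.Connected) {v : V} (c : G.Walk v v) (hc : c.IsTrail)
    {e : Sym2 V} (he : e ∈ G.edgeSet) (hee : e ∉ c.edges) :
    ∃ (u : V) (c' : G.Walk u u), c'.IsTrail ∧ c.length < c'.length := by
  classical
  -- find u on c with an unused incident edge
  induction e using Sym2.ind with | _ a b =>
  have hadj : G.Adj a b := he
  obtain ⟨u, u', hu, huu', hnotc⟩ : ∃ u u', u ∈ c.support ∧ G.Adj u u' ∧ s(u, u') ∉ c.edges := by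
    obtain ⟨p⟩ := hconn v a
    refine exists_unused_at_support c (p.concat hadj) c.start_mem_support ⟨s(a,b), ?_, hee⟩
    simp [edges_concat]
  -- set up maximal-length trail from u avoiding c's edges
  set B := G.edgeFinset.card with hB
  set P : ℕ → Prop := fun n => ∃ (w : V) (q : G.Walk u w), q.IsTrail ∧
      (∀ e' ∈ q.edges, e' ∉ c.edges) ∧ q.length = n with hP
  have hbound : ∀ n, P n → n ≤ B := by
    rintro n ⟨w, q, hq, _, rfl⟩
    exact trail_length_le hq
  have hP1 : P 1 := by
    refine ⟨u', cons huu' nil, ?_, ?_, rfl⟩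
    · simp [isTrail_def]
    · intro e' he'
      simp only [edges_cons, edges_nil, List.mem_singleton] at he'
      subst he'
      exact hnotc
  have h1B : 1 ≤ B := hbound 1 hP1
  set n := Nat.findGreatest P B with hn
  have hPn : P n := Nat.findGreatest_spec h1B hP1
  have hn1 : 1 ≤ n := Nat.le_findGreatest h1B hP1
  obtain ⟨w, q, hq, hqc, hqlen⟩ := hPn
  -- the maximal trail is closed
  have hwu : w = u := by
    by_contra hwu
    -- every incident edge at w is used, otherwise extend
    have hall : ∀ w', G.Adj w w' → s(w, w') ∈ c.edges ∨ s(w, w') ∈ q.edges := by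
      intro w' hww'
      by_contra hcon
      push_neg at hcon
      have hq' : (q.concat hww').IsTrail := by
        rw [isTrail_def, edges_concat, List.concat_eq_append, List.nodup_append]
        exact ⟨hq.edges_nodup, List.nodup_singleton _,
          by intro a ha b hb h; simp only [List.mem_singleton] at hb; subst hb; subst h; exact hcon.2 ha⟩
      have : P (n + 1) := by
        refine ⟨w', q.concat hww', hq', ?_, by simp [length_concat, hqlen]⟩
        intro e' he'
        rw [edges_concat, List.concat_eq_append, List.mem_append] at he'
        rcases he' with he' | he'
        · exact hqc e' he'
        · simp only [List.mem_singleton] at he'; subst he'; exact hcon.1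
      have := Nat.le_findGreatest (hbound _ this) this
      omega
    -- parity contradiction at w
    set l := c.edges ++ q.edges with hl
    have hlnd : l.Nodup := by
      rw [List.nodup_append]
      exact ⟨hc.edges_nodup, hq.edges_nodup, fun e' he' b hb h => hqc b hb (h ▸ he')⟩
    have hcount : l.countP (fun e' => w ∈ e') = G.degree w := by
      rw [← card_incidenceFinset_eq_degree]
      have : (l.filter (fun e' => w ∈ e')).length = l.countP (fun e' => w ∈ e') :=
        List.countP_eq_length_filter.symm
      rw [← this]
      have hnd2 : (l.filter (fun e' => w ∈ e')).Nodup := hlnd.filter _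
      rw [← List.toFinset_card_of_nodup hnd2]
      congr 1
      apply Finset.Subset.antisymm
      · intro e' he'
        rw [List.mem_toFinset, List.mem_filter] at he'
        rw [mem_incidenceFinset]
        refine ⟨?_, by simpa using he'.2⟩
        rcases List.mem_append.mp he'.1 with h' | h'
        · exact c.edges_subset_edgeSet h'
        · exact q.edges_subset_edgeSet h'
      · intro e' he'
        rw [mem_incidenceFinset] at he'
        obtain ⟨hee', hwe⟩ := he'
        rw [List.mem_toFinset, List.mem_filter]
        refine ⟨?_, by simpa using hwe⟩
        rw [List.mem_append]
        revert hee' hwe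
        refine Sym2.ind (fun x y hxy hwe => ?_) e'
        rcases (Sym2.mem_iff.mp hwe) with rfl | rfl
        · rcases hall y hxy with h' | h'
          · exact Or.inl h'
          · exact Or.inr h'
        · rcases hall x hxy.symm with h' | h'
          · exact Or.inl (by rwa [Sym2.eq_swap])
          · exact Or.inr (by rwa [Sym2.eq_swap])
    have heq : l.countP (fun e' => w ∈ e') =
        c.edges.countP (fun e' => w ∈ e') + q.edges.countP (fun e' => w ∈ e') :=
      List.countP_append
    have hce : Even (c.edges.countP fun e' => w ∈ e') := by
      rw [hc.even_countP_edges_iff w]; intro h; exact absurd rfl h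
    have hqe : ¬ Even (q.edges.countP fun e' => w ∈ e') := odd_countP hq (Ne.symm hwu)
    have := heven w
    rw [← hcount, heq] at this
    rcases Nat.even_add.mp this with h
    exact hqe (h.mp hce)
  subst hwu
  -- splice
  refine ⟨w, (c.rotate w hu).append q, ?_, ?_⟩
  · rw [isTrail_def, edges_append, List.nodup_append]
    have hperm := rotate_edges c w hu
    refine ⟨hperm.perm.nodup_iff.mpr hc.edges_nodup, hq.edges_nodup, ?_⟩
    intro e' he' b hb h
    subst h
    exact hqc e' hb (hperm.perm.mem_iff.mp he')
  · have h1 : ((c.rotate w hu).append q).length = (c.rotate w hu).length + q.length :=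
      length_append _ _
    have h2 : (c.rotate w hu).length = c.length := by
      rw [← length_edges, ← length_edges]
      exact (rotate_edges c w hu).perm.length_eq
    omega

/-- Euler's theorem: existence of an Eulerian circuit. -/
theorem exists_eulerian [DecidableRel G.Adj] (hconn : G.Connected)
    (heven : ∀ x : V, Even (G.degree x)) (hne : G.edgeSet.Nonempty) :
    ∃ (x : V) (w : G.Walk x x), w.IsEulerian := by
  classical
  obtain ⟨e, he⟩ := hne
  induction e using Sym2.ind with | _ a b =>
  suffices h : ∀ (n : ℕ) (u : V) (c : G.Walk u u), c.IsTrail →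
      G.edgeFinset.card - c.length ≤ n → ∃ (x : V) (w : G.Walk x x), w.IsEulerian by
    exact h G.edgeFinset.card a nil IsTrail.nil (by simp)
  intro n
  induction n with
  | zero =>
    intro u c hc hlen
    refine ⟨u, c, hc.isEulerian_of_forall_mem ?_⟩
    intro e' he'
    have hle : G.edgeFinset.card ≤ c.length := by omega
    have hsub : c.edges.toFinset ⊆ G.edgeFinset := by
      intro x hx
      rw [List.mem_toFinset] at hx
      rw [mem_edgeFinset]
      exact c.edges_subset_edgeSet hx
    have hcard : c.edges.toFinset.card = c.length := by
      rw [List.toFinset_card_of_nodup hc.edges_nodup, length_edges]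
    have : G.edgeFinset ⊆ c.edges.toFinset :=
      Finset.subset_of_eq (Finset.eq_of_subset_of_card_le hsub (by omega)).symm
    have := this (mem_edgeFinset.mpr he')
    rwa [List.mem_toFinset] at this
  | succ n ih =>
    intro u c hc hlen
    by_cases hfull : ∀ e' ∈ G.edgeSet, e' ∈ c.edges
    · exact ⟨u, c, hc.isEulerian_of_forall_mem hfull⟩
    · push_neg at hfull
      obtain ⟨e', he', hec⟩ := hfull
      obtain ⟨u', c', hc', hlt⟩ := exists_longer heven hconn c hc he' hec
      refine ih u' c' hc' ?_
      have := trail_length_le hc'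
      omega

end EulerAux

/-- A *flag* of a combinatorial polygonal complex: a pair `(v, f)` of a vertex and a face
such that `v` is incident to some edge of the edge set `E f` of the face `f`. -/
abbrev EulerFlag {V F : Type*} (E : F → Finset (Sym2 V)) : Type _ :=
  {p : V × F // ∃ e ∈ E p.2, p.1 ∈ e}

/-- The adjacency relation of the Euler-transformed graph on flags:
`(u, f)` and `(v, f)` are related when `{u, v} ∈ E f`, and `(v, f)` and `(v, f')` are related
when `f ≠ f'` and some edge `e ∈ E f ∩ E f'` contains `v`. -/
def eulerRel {V F : Type*} (E : F → Finset (Sym2 V)) (p q : EulerFlag E) : Prop :=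
  (p.val.2 = q.val.2 ∧ p.val.1 ≠ q.val.1 ∧ s(p.val.1, q.val.1) ∈ E p.val.2) ∨
    (p.val.1 = q.val.1 ∧ p.val.2 ≠ q.val.2 ∧
      ∃ e, e ∈ E p.val.2 ∧ e ∈ E q.val.2 ∧ p.val.1 ∈ e)

/-- The Euler-transformed graph `Ĝ` on flags. -/
def eulerGraph {V F : Type*} (E : F → Finset (Sym2 V)) : SimpleGraph (EulerFlag E) :=
  SimpleGraph.fromRel (eulerRel E)

/-- The union graph `G` on `V` whose edge set is `E = ⋃ f, E f`. -/
def unionGraph {V F : Type*} (E : F → Finset (Sym2 V)) : SimpleGraph V :=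
  SimpleGraph.fromEdgeSet {e : Sym2 V | ∃ f, e ∈ E f}

/-- The link graph `L_v`: the simple graph on the faces containing `v`, where `f` and `f'`
are adjacent whenever `f ≠ f'` and some edge `e ∈ E f ∩ E f'` contains `v`. -/
def linkGraph {V F : Type*} (E : F → Finset (Sym2 V)) (v : V) :
    SimpleGraph {f : F // ∃ e ∈ E f, v ∈ e} :=
  SimpleGraph.fromRel (fun f f' => ∃ e, e ∈ E f.val ∧ e ∈ E f'.val ∧ v ∈ e)

namespace EulerApp

variable {V F : Type*} (E : F → Finset (Sym2 V))

lemma eulerRel_symm {p q : EulerFlag E} (h : eulerRel E q p) : eulerRel E p q := by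
  rcases h with ⟨h1, h2, h3⟩ | ⟨h1, h2, h3⟩
  · exact Or.inl ⟨h1.symm, h2.symm, by rw [Sym2.eq_swap]; exact h1 ▸ h3⟩
  · obtain ⟨e, he1, he2, he3⟩ := h3
    exact Or.inr ⟨h1.symm, h2.symm, e, he2, he1, h1 ▸ he3⟩

lemma eulerRel_ne {p q : EulerFlag E} (h : eulerRel E p q) : p ≠ q := by
  rcases h with ⟨_, h2, _⟩ | ⟨_, h2, _⟩ <;> (intro he; subst he; exact h2 rfl)

lemma eulerGraph_adj {p q : EulerFlag E} :
    (eulerGraph E).Adj p q ↔ eulerRel E p q := by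
  rw [eulerGraph, SimpleGraph.fromRel_adj]
  constructor
  · rintro ⟨hne, h | h⟩
    · exact h
    · exact eulerRel_symm E h
  · intro h
    exact ⟨eulerRel_ne E h, Or.inl h⟩

/-- The other face of an edge, given the two-face condition. -/
lemma other_face [Fintype F]
    (htwo : ∀ e : Sym2 V, (∃ f, e ∈ E f) →
      (Finset.univ.filter (fun f => e ∈ E f)).card = 2)
    {e : Sym2 V} {f : F} (he : e ∈ E f) :
    ∃ g, g ≠ f ∧ e ∈ E g ∧ ∀ g', e ∈ E g' → g' = f ∨ g' = g := by
  have h2 := htwo e ⟨f, he⟩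
  obtain ⟨x, y, hxy, hset⟩ := Finset.card_eq_two.mp h2
  have hf : f ∈ ({x, y} : Finset F) := by
    rw [← hset]; simp [he]
  have hmem : ∀ g', e ∈ E g' → g' ∈ ({x, y} : Finset F) := by
    intro g' hg'
    rw [← hset]; simp [hg']
  rcases Finset.mem_insert.mp hf with rfl | hf
  · refine ⟨y, hxy.symm, ?_, ?_⟩
    · have : y ∈ Finset.univ.filter (fun f => e ∈ E f) := by rw [hset]; simp
      simpa using this
    · intro g' hg'
      rcases Finset.mem_insert.mp (hmem g' hg') with h | h
      · exact Or.inl h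
      · exact Or.inr (Finset.mem_singleton.mp h)
  · rw [Finset.mem_singleton] at hf; subst hf
    refine ⟨x, hxy, ?_, ?_⟩
    · have : x ∈ Finset.univ.filter (fun f => e ∈ E f) := by rw [hset]; simp
      simpa using this
    · intro g' hg'
      rcases Finset.mem_insert.mp (hmem g' hg') with h | h
      · exact Or.inr h
      · exact Or.inl (Finset.mem_singleton.mp h)

variable [Fintype V] [Fintype F]

lemma degree_eq_four
    (hnd : ∀ f, ∀ e ∈ E f, ¬ e.IsDiag)
    (hloc : ∀ f v, (∃ e ∈ E f, v ∈ e) → ((E f).filter (fun e => v ∈ e)).card = 2)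
    (htwo : ∀ e : Sym2 V, (∃ f, e ∈ E f) →
      (Finset.univ.filter (fun f => e ∈ E f)).card = 2)
    (hshare : ∀ f f' : F, f ≠ f' → ((E f) ∩ (E f')).card ≤ 1)
    (p : EulerFlag E) : (eulerGraph E).degree p = 4 := by
  obtain ⟨⟨v, f⟩, hp⟩ := p
  obtain ⟨e1, e2, he12, hset⟩ := Finset.card_eq_two.mp (hloc f v hp)
  have he1 : e1 ∈ (E f).filter (fun e => v ∈ e) := by rw [hset]; simp
  have he2 : e2 ∈ (E f).filter (fun e => v ∈ e) := by rw [hset]; simp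
  rw [Finset.mem_filter] at he1 he2
  obtain ⟨he1f, hve1⟩ := he1
  obtain ⟨he2f, hve2⟩ := he2
  obtain ⟨u1, hu1⟩ := Sym2.mem_iff_exists.mp hve1
  obtain ⟨u2, hu2⟩ := Sym2.mem_iff_exists.mp hve2
  have hvu1 : v ≠ u1 := fun h => hnd f e1 he1f (by rw [hu1, Sym2.mk_isDiag_iff]; exact h)
  have hvu2 : v ≠ u2 := fun h => hnd f e2 he2f (by rw [hu2, Sym2.mk_isDiag_iff]; exact h)
  have hu12 : u1 ≠ u2 := fun h => he12 (by rw [hu1, hu2, h])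
  obtain ⟨f1, hf1ne, he1f1, hf1uniq⟩ := other_face E htwo he1f
  obtain ⟨f2, hf2ne, he2f2, hf2uniq⟩ := other_face E htwo he2f
  have hf12 : f1 ≠ f2 := by
    intro h
    subst h
    have hsub : ({e1, e2} : Finset (Sym2 V)) ⊆ E f ∩ E f1 := by
      intro e he
      rcases Finset.mem_insert.mp he with rfl | he
      · exact Finset.mem_inter.mpr ⟨he1f, he1f1⟩
      · rw [Finset.mem_singleton] at he; subst he
        exact Finset.mem_inter.mpr ⟨he2f, he2f2⟩
    have := Finset.card_le_card hsub
    rw [Finset.card_insert_of_notMem (by simpa using he12), Finset.card_singleton] at this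
    have := le_trans this (hshare f f1 (Ne.symm hf1ne))
    omega
  -- the four neighbours
  set a1 : EulerFlag E := ⟨(u1, f), ⟨e1, he1f, by rw [hu1]; simp⟩⟩ with ha1
  set a2 : EulerFlag E := ⟨(u2, f), ⟨e2, he2f, by rw [hu2]; simp⟩⟩ with ha2
  set b1 : EulerFlag E := ⟨(v, f1), ⟨e1, he1f1, hve1⟩⟩ with hb1
  set b2 : EulerFlag E := ⟨(v, f2), ⟨e2, he2f2, hve2⟩⟩ with hb2
  set p : EulerFlag E := ⟨(v, f), hp⟩ with hpdef
  have hN : (eulerGraph E).neighborFinset p = {a1, a2, b1, b2} := by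
    ext q
    rw [SimpleGraph.mem_neighborFinset, eulerGraph_adj]
    constructor
    · rintro (⟨h1, h2, h3⟩ | ⟨h1, h2, h3⟩)
      · -- same face
        simp only [hpdef] at h1 h2 h3
        have : s(v, q.val.1) ∈ (E f).filter (fun e => v ∈ e) := by
          rw [Finset.mem_filter]; exact ⟨h3, by simp⟩
        rw [hset] at this
        rcases Finset.mem_insert.mp this with h | h
        · have : q.val.1 = u1 := by
            rw [hu1] at h
            rcases (Sym2.mk_eq_mk_iff (p := (v, q.val.1)) (q := (v, u1))).mp h with h | h
            · exact congrArg Prod.snd h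
            · exact absurd (congrArg Prod.snd h) (fun hh => h2 hh.symm)
          have hq : q = a1 := Subtype.ext (Prod.ext this h1.symm)
          simp [hq]
        · rw [Finset.mem_singleton] at h
          have : q.val.1 = u2 := by
            rw [hu2] at h
            rcases (Sym2.mk_eq_mk_iff (p := (v, q.val.1)) (q := (v, u2))).mp h with h | h
            · exact congrArg Prod.snd h
            · exact absurd (congrArg Prod.snd h) (fun hh => h2 hh.symm)
          have hq : q = a2 := Subtype.ext (Prod.ext this h1.symm)
          simp [hq]
      · -- same vertex
        obtain ⟨e, hef, heq, hve⟩ := h3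
        simp only [hpdef] at h1 h2 hef hve
        have : e ∈ (E f).filter (fun e => v ∈ e) := by
          rw [Finset.mem_filter]; exact ⟨hef, hve⟩
        rw [hset] at this
        rcases Finset.mem_insert.mp this with h | h
        · subst h
          rcases hf1uniq q.val.2 heq with h | h
          · exact absurd h.symm h2
          · have hq : q = b1 := Subtype.ext (Prod.ext h1.symm h)
            simp [hq]
        · rw [Finset.mem_singleton] at h; subst h
          rcases hf2uniq q.val.2 heq with h | h
          · exact absurd h.symm h2
          · have hq : q = b2 := Subtype.ext (Prod.ext h1.symm h)
            simp [hq]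
    · intro hq
      simp only [Finset.mem_insert, Finset.mem_singleton] at hq
      rcases hq with rfl | rfl | rfl | rfl
      · exact Or.inl ⟨rfl, hvu1, by rw [← hu1]; exact he1f⟩
      · exact Or.inl ⟨rfl, hvu2, by rw [← hu2]; exact he2f⟩
      · exact Or.inr ⟨rfl, Ne.symm hf1ne, e1, he1f, he1f1, hve1⟩
      · exact Or.inr ⟨rfl, Ne.symm hf2ne, e2, he2f, he2f2, hve2⟩
  rw [SimpleGraph.degree, hN]
  have hab1 : a1 ≠ b1 := fun h => by
    rw [ha1, hb1, Subtype.mk.injEq, Prod.mk.injEq] at h; exact hvu1 h.1.symm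
  have hab2 : a1 ≠ b2 := fun h => by
    rw [ha1, hb2, Subtype.mk.injEq, Prod.mk.injEq] at h; exact hvu1 h.1.symm
  have hab3 : a2 ≠ b1 := fun h => by
    rw [ha2, hb1, Subtype.mk.injEq, Prod.mk.injEq] at h; exact hvu2 h.1.symm
  have hab4 : a2 ≠ b2 := fun h => by
    rw [ha2, hb2, Subtype.mk.injEq, Prod.mk.injEq] at h; exact hvu2 h.1.symm
  have ha12 : a1 ≠ a2 := fun h => by
    rw [ha1, ha2, Subtype.mk.injEq, Prod.mk.injEq] at h; exact hu12 h.1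
  have hb12 : b1 ≠ b2 := fun h => by
    rw [hb1, hb2, Subtype.mk.injEq, Prod.mk.injEq] at h; exact hf12 h.2
  rw [Finset.card_insert_of_notMem (by simp [ha12, hab1, hab2]),
    Finset.card_insert_of_notMem (by simp [hab3, hab4]),
    Finset.card_insert_of_notMem (by simp [hb12]), Finset.card_singleton]

/-- Graph homomorphism from the link graph at `v` into the Euler graph. -/
def linkHom (v : V) : linkGraph E v →g eulerGraph E where
  toFun f := ⟨(v, f.val), f.property⟩
  map_rel' := by
    intro f f' h
    rw [linkGraph, SimpleGraph.fromRel_adj] at h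
    obtain ⟨hne, h | h⟩ := h
    · obtain ⟨e, he1, he2, hve⟩ := h
      exact (eulerGraph_adj E).mpr (Or.inr ⟨rfl, fun hh => hne (Subtype.ext hh), e, he1, he2, hve⟩)
    · obtain ⟨e, he1, he2, hve⟩ := h
      exact (eulerGraph_adj E).mpr (Or.inr ⟨rfl, fun hh => hne (Subtype.ext hh), e, he2, he1, hve⟩)

omit [Fintype V] [Fintype F] in
lemma reachable_same_vertex (hlink : ∀ v : V, (linkGraph E v).Connected)
    (p q : EulerFlag E) (h : p.val.1 = q.val.1) : (eulerGraph E).Reachable p q := by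
  obtain ⟨⟨v, f⟩, hpf⟩ := p
  obtain ⟨⟨w, g⟩, hqg⟩ := q
  simp only at h
  subst h
  exact ((hlink v).preconnected ⟨f, hpf⟩ ⟨g, hqg⟩).map (linkHom E v)

lemma euler_preconnected (hGconn : (unionGraph E).Connected)
    (hlink : ∀ v : V, (linkGraph E v).Connected) : (eulerGraph E).Preconnected := by
  have aux : ∀ {v w : V} (_ : (unionGraph E).Walk v w) (p q : EulerFlag E),
      p.val.1 = v → q.val.1 = w → (eulerGraph E).Reachable p q := by
    intro v w W
    induction W with
    | nil =>
      intro p q hp hq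
      exact reachable_same_vertex E hlink p q (by rw [hp, hq])
    | @cons a b c h W ih =>
      intro p q hp hq
      rw [unionGraph, SimpleGraph.fromEdgeSet_adj] at h
      obtain ⟨⟨f0, hf0⟩, hab⟩ := h
      set p0 : EulerFlag E := ⟨(a, f0), ⟨s(a, b), hf0, by simp⟩⟩ with hp0
      set p1 : EulerFlag E := ⟨(b, f0), ⟨s(a, b), hf0, by simp⟩⟩ with hp1
      have h01 : (eulerGraph E).Adj p0 p1 :=
        (eulerGraph_adj E).mpr (Or.inl ⟨rfl, hab, hf0⟩)
      exact ((reachable_same_vertex E hlink p p0 hp).trans h01.reachable).trans (ih p1 q rfl hq)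
  intro p q
  obtain ⟨W⟩ := hGconn.preconnected p.val.1 q.val.1
  exact aux W p q rfl rfl

end EulerApp

/-- If the union graph is connected and nonempty and all link graphs are connected, then
the Euler-transformed graph admits an Eulerian circuit. -/
theorem euler_transform_eulerian_circuit {V F : Type*} [Fintype V] [Fintype F]
    (E : F → Finset (Sym2 V))
    (hnd : ∀ f, ∀ e ∈ E f, ¬ e.IsDiag)
    (hloc : ∀ f v, (∃ e ∈ E f, v ∈ e) → ((E f).filter (fun e => v ∈ e)).card = 2)
    (htwo : ∀ e : Sym2 V, (∃ f, e ∈ E f) →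
      (Finset.univ.filter (fun f => e ∈ E f)).card = 2)
    (hshare : ∀ f f' : F, f ≠ f' → ((E f) ∩ (E f')).card ≤ 1)
    (hGconn : (unionGraph E).Connected)
    (hne : ∃ f, (E f).Nonempty)
    (hlink : ∀ v : V, (linkGraph E v).Connected) :
    ∃ (x : EulerFlag E) (w : (eulerGraph E).Walk x x), w.IsEulerian := by
  classical
  obtain ⟨f, e, he⟩ := hne
  revert he
  induction e using Sym2.ind with | _ a b =>
  intro he
  have hab : a ≠ b := fun h => hnd f _ he (Sym2.mk_isDiag_iff.mpr h)
  set pa : EulerFlag E := ⟨(a, f), ⟨s(a, b), he, by simp⟩⟩ with hpa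
  set pb : EulerFlag E := ⟨(b, f), ⟨s(a, b), he, by simp⟩⟩ with hpb
  have hadjE : (eulerGraph E).Adj pa pb :=
    (EulerApp.eulerGraph_adj E).mpr (Or.inl ⟨rfl, hab, he⟩)
  have : Nonempty (EulerFlag E) := ⟨pa⟩
  have hconn : (eulerGraph E).Connected :=
    ⟨EulerApp.euler_preconnected E hGconn hlink⟩
  have heven : ∀ x : EulerFlag E, Even ((eulerGraph E).degree x) := fun x => by
    rw [EulerApp.degree_eq_four E hnd hloc htwo hshare x]
    exact ⟨2, rfl⟩
  have hEne : (eulerGraph E).edgeSet.Nonempty := ⟨s(pa, pb), hadjE⟩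
  exact EulerAux.exists_eulerian hconn heven hEne
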